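/- Let Λ be a numerical semigroup with conductor c = c(Λ) and rank k = k(Λ), and let λ be an integer with c ≤ λ < 2c. Let j be the unique index with 0 ≤ j ≤ k−1 and λ_j ≤ λ − c < λ_{j+1}. Then λ − λ_j is an order-j seed of Λ if and only if λ is not the sum of two elements of the set {λ_{j+1}, λ_{j+2}, …, λ_{k−1}}. -/
import Mathlib


/-- A numerical semigroup: a cofinite submonoid of ℕ, viewed as a set of naturals. -/
def IsNumericalSemigroup (S : Set ℕ) : Prop :=
  0 ∈ S ∧ (∀ a ∈ S, ∀ b ∈ S, a + b ∈ S) ∧ ∃ N : ℕ, ∀ n : ℕ, N ≤ n → n ∈ S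

/-- The conductor: the smallest `N` such that every `n ≥ N` belongs to `S`. -/
noncomputable def sgConductor (S : Set ℕ) : ℕ :=
  sInf {N : ℕ | ∀ n : ℕ, N ≤ n → n ∈ S}

/-- The genus: the number of gaps. -/
noncomputable def sgGenus (S : Set ℕ) : ℕ :=
  Sᶜ.ncard

/-- The rank `k(Λ) = c(Λ) - g(Λ)`. -/
noncomputable def sgRank (S : Set ℕ) : ℕ :=
  sgConductor S - sgGenus S

/-- The multiplicity: the smallest nonzero element. -/
noncomputable def sgMultiplicity (S : Set ℕ) : ℕ :=
  sInf {n : ℕ | n ∈ S ∧ n ≠ 0}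

/-- The Frobenius number: the largest gap, i.e. the conductor minus one. -/
noncomputable def sgFrobenius (S : Set ℕ) : ℕ :=
  sgConductor S - 1

/-- `sgElem S j` is the element `λ_j` of `S = {λ_0 = 0 < λ_1 < λ_2 < ⋯}`. -/
noncomputable def sgElem (S : Set ℕ) (j : ℕ) : ℕ :=
  Nat.nth (· ∈ S) j

/-- The jump `u_j = λ_{j+1} - λ_j`. -/
noncomputable def sgJump (S : Set ℕ) (j : ℕ) : ℕ :=
  sgElem S (j + 1) - sgElem S j

/-- The left elements: elements of `S` smaller than the Frobenius number. -/
def sgLeftElements (S : Set ℕ) : Set ℕ :=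
  {x : ℕ | x ∈ S ∧ x + 1 < sgConductor S}

/-- A minimal generator: a nonzero element not the sum of two nonzero elements. -/
def IsMinimalGenerator (S : Set ℕ) (x : ℕ) : Prop :=
  x ∈ S ∧ x ≠ 0 ∧ ¬ ∃ a ∈ S, ∃ b ∈ S, a ≠ 0 ∧ b ≠ 0 ∧ a + b = x

/-- A right generator: a minimal generator larger than the Frobenius number. -/
def IsRightGenerator (S : Set ℕ) (x : ℕ) : Prop :=
  IsMinimalGenerator S x ∧ sgFrobenius S < x

/-- A strong generator: a right generator `μ` such that `μ + m(Λ)` is a minimal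
generator of `Λ ∖ {μ}`. -/
noncomputable def IsStrongGenerator (S : Set ℕ) (x : ℕ) : Prop :=
  IsRightGenerator S x ∧ IsMinimalGenerator (S \ {x}) (x + sgMultiplicity S)

/-- A new generator of `Λ`: a minimal generator of `Λ` that is not a minimal
generator of `Λ ∪ {F(Λ)}`. -/
noncomputable def IsNewGenerator (S : Set ℕ) (x : ℕ) : Prop :=
  IsMinimalGenerator S x ∧ ¬ IsMinimalGenerator (S ∪ {sgFrobenius S}) x

/-- `x` (an element `λ_s ≥ c(Λ)`) is an order-`p` seed of `Λ` if
`x + λ_p ≠ λ_i + λ_j` for all `p < i ≤ j < s`, i.e. for all `i ≤ j` with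
`p < i` and `λ_j < x`. -/
noncomputable def IsSeed (S : Set ℕ) (p x : ℕ) : Prop :=
  sgConductor S ≤ x ∧ ∀ i j : ℕ, p < i → i ≤ j → sgElem S j < x →
    x + sgElem S p ≠ sgElem S i + sgElem S j

/-- `T` is a child of `S`: obtained by removing one right generator. -/
def IsChild (T S : Set ℕ) : Prop :=
  ∃ μ : ℕ, IsRightGenerator S μ ∧ T = S \ {μ}

/-- A grandchild: a child of a child. -/
def IsGrandchild (T S : Set ℕ) : Prop :=
  ∃ C : Set ℕ, IsChild C S ∧ IsChild T C

/-- A great-grandchild: a child of a grandchild. -/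
def IsGreatGrandchild (T S : Set ℕ) : Prop :=
  ∃ C : Set ℕ, IsGrandchild C S ∧ IsChild T C

/-- `⟨a,b,c,…⟩|_κ`: the smallest numerical semigroup containing a given set. -/
def sgClosure (A : Set ℕ) : Set ℕ :=
  ⋂₀ {S : Set ℕ | IsNumericalSemigroup S ∧ A ⊆ S}


theorem statement1 (S : Set ℕ) (hS : IsNumericalSemigroup S)
    (lam j : ℕ)
    (hc : sgConductor S ≤ lam) (hc2 : lam < 2 * sgConductor S)
    (hjk : j < sgRank S)
    (hj1 : sgElem S j ≤ lam - sgConductor S)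
    (hj2 : lam - sgConductor S < sgElem S (j + 1)) :
    IsSeed S j (lam - sgElem S j) ↔
      ¬ ∃ i₁ i₂ : ℕ, j < i₁ ∧ i₁ < sgRank S ∧ j < i₂ ∧ i₂ < sgRank S ∧
        sgElem S i₁ + sgElem S i₂ = lam := by
  classical
  -- basic setup
  obtain ⟨h0, hadd, N, hN⟩ := hS
  set c := sgConductor S with hcdef
  have hcm : ∀ n, c ≤ n → n ∈ S := by
    have : c ∈ {N : ℕ | ∀ n : ℕ, N ≤ n → n ∈ S} := Nat.sInf_mem ⟨N, hN⟩
    exact this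
  have hInf : (setOf (· ∈ S)).Infinite := by
    have hsub : Set.Ici c ⊆ setOf (· ∈ S) := fun n hn => hcm n hn
    exact (Set.Ici_infinite c).mono hsub
  have hmono : ∀ {a b : ℕ}, a ≤ b → sgElem S a ≤ sgElem S b := fun h =>
    (Nat.nth_le_nth hInf).2 h
  have hsmono : ∀ {a b : ℕ}, a < b → sgElem S a < sgElem S b := fun h =>
    (Nat.nth_lt_nth hInf).2 h
  -- rank equals the count of elements below c
  have hrank : sgRank S = Nat.count (· ∈ S) c := by
    have hcompl : Sᶜ = ↑((Finset.range c).filter (fun n => n ∉ S)) := by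
      ext n
      simp only [Set.mem_compl_iff, Finset.coe_filter, Finset.mem_range, Set.mem_setOf_eq]
      constructor
      · intro hn
        refine ⟨?_, hn⟩
        by_contra h
        exact hn (hcm n (le_of_not_gt h))
      · exact fun h => h.2
    have hg : sgGenus S = ((Finset.range c).filter (fun n => n ∉ S)).card := by
      rw [sgGenus, hcompl, Set.ncard_coe_finset]
    have hcount : Nat.count (· ∈ S) c = ((Finset.range c).filter (fun n => n ∈ S)).card :=
      Nat.count_eq_card_filter_range _ _
    have hsplit : ((Finset.range c).filter (fun n => n ∈ S)).card
        + ((Finset.range c).filter (fun n => n ∉ S)).card = c := by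
      rw [Finset.card_filter_add_card_filter_not, Finset.card_range]
    rw [sgRank, hg, hcount]
    omega
  have hlt_iff : ∀ s : ℕ, sgElem S s < c ↔ s < sgRank S := by
    intro s
    simp only [sgElem]
    rw [hrank, ← Nat.lt_nth_iff_count_lt hInf]
  -- arithmetic facts
  have hlam_j : sgElem S j + c ≤ lam := by omega
  have hx : (lam - sgElem S j) + sgElem S j = lam := by omega
  have hcx : c ≤ lam - sgElem S j := by omega
  have hj2' : lam < sgElem S (j + 1) + c := by omega
  constructor
  · rintro ⟨-, hseed⟩ ⟨i₁, i₂, h1, hk1, h2, h2k, heq⟩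
    rcases le_total i₁ i₂ with hle | hle
    · have hlj : sgElem S j < sgElem S i₁ := hsmono h1
      have hlt : sgElem S i₂ < lam - sgElem S j := by omega
      exact hseed i₁ i₂ h1 hle hlt (by omega)
    · have hlj : sgElem S j < sgElem S i₂ := hsmono h2
      have hlt : sgElem S i₁ < lam - sgElem S j := by omega
      exact hseed i₂ i₁ h2 hle hlt (by omega)
  · intro hno
    refine ⟨hcx, fun i j' hji hij' hlt heq => hno ?_⟩
    have hij : sgElem S (j + 1) ≤ sgElem S i := hmono hji
    have hsum : sgElem S i + sgElem S j' = lam := by omega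
    have hj'c : sgElem S j' < c := by omega
    have hj'k : j' < sgRank S := (hlt_iff j').1 hj'c
    have hik : i < sgRank S := lt_of_le_of_lt hij' hj'k
    exact ⟨i, j', hji, hik, lt_of_lt_of_le hji hij', hj'k, hsum⟩
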